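/- Let d ≥ 1, h > 0, T ≥ 0, δ > 0, and let ũ, ṽ : [0, T+δ] → ℝ^d be continuous functions that coincide on [0, T]. Then for every t ∈ [T, T+δ], |𝓕^(h)(ũ)(t) − 𝓕^(h)(ṽ)(t)| ≤ 4 (t/h²)(t − T) C_g ‖ũ − ṽ‖_{∞,[T,T+δ]}, where C_g = ∫_{ℝ^d} |η| |g(η)| dη. -/

import Mathlib

open MeasureTheory Filter Set
open scoped RealInnerProductSpace Topology ENNReal

noncomputable section

abbrev E (d : ℕ) := EuclideanSpace ℝ (Fin d)

/-- `g(η) = η |f(η)|²`. -/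
def gfun {d : ℕ} (f : SchwartzMap (E d) ℂ) (η : E d) : E d := ‖f η‖ ^ 2 • η

/-- the average `⨍_a^b u(σ) dσ`. -/
def intAvg {d : ℕ} (u : ℝ → E d) (a b : ℝ) : E d := (b - a)⁻¹ • ∫ σ in a..b, u σ

/-- `𝓕^(h)(u)(t)`; since `g` is real-valued, taking the real part of the complex
integral amounts to replacing `e^{-irθ}` by `cos (rθ)`. -/
def calF {d : ℕ} (f : SchwartzMap (E d) ℂ) (h : ℝ) (u : ℝ → E d) (t : ℝ) : E d :=
  (-2 : ℝ) • ∫ η, (∫ r in (0:ℝ)..(t / h),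
    Real.cos (r * (‖η‖ ^ 2 - 2 * ⟪η, intAvg u (t - h * r) t⟫))) • gfun f η

lemma abs_cos_sub_cos_le (a b : ℝ) : |Real.cos a - Real.cos b| ≤ |a - b| := by
  rw [Real.cos_sub_cos, abs_mul, abs_mul, abs_neg, abs_two]
  have h1 : |Real.sin ((a + b) / 2)| ≤ 1 := Real.abs_sin_le_one _
  have h2 : |Real.sin ((a - b) / 2)| ≤ |(a - b) / 2| := Real.abs_sin_le_abs
  have h3 : |(a - b) / 2| = |a - b| / 2 := by rw [abs_div, abs_two]
  nlinarith [abs_nonneg (Real.sin ((a + b) / 2)), abs_nonneg (Real.sin ((a - b) / 2)),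
    abs_nonneg (a - b)]

def cfun {d : ℕ} (t h : ℝ) (p : ℝ → E d) (η : E d) : ℝ :=
  ∫ r in (0:ℝ)..(t / h),
    Real.cos (r * ‖η‖ ^ 2 - 2 * h⁻¹ * ⟪η, ∫ σ in (t - h * r)..t, p σ⟫)

set_option maxHeartbeats 2000000 in
/-- if `ũ, ṽ` are continuous on `[0, T+δ]` and coincide on `[0, T]`, then for
`t ∈ [T, T+δ]`, `|𝓕^(h)(ũ)(t) − 𝓕^(h)(ṽ)(t)| ≤ 4 (t/h²)(t−T) C_g ‖ũ−ṽ‖_{∞,[T,T+δ]}` with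
`C_g = ∫ |η| |g(η)| dη`. -/
theorem statement1 (d : ℕ) (hd : 1 ≤ d) (f : SchwartzMap (E d) ℂ) (h : ℝ) (hh : 0 < h)
    (T δ : ℝ) (hT : 0 ≤ T) (hδ : 0 < δ) (u v : ℝ → E d)
    (hu : ContinuousOn u (Set.Icc 0 (T + δ))) (hv : ContinuousOn v (Set.Icc 0 (T + δ)))
    (huv : Set.EqOn u v (Set.Icc 0 T)) :
    ∀ t ∈ Set.Icc T (T + δ),
      ‖calF f h u t - calF f h v t‖ ≤
        4 * (t / h ^ 2) * (t - T) * (∫ η, ‖η‖ * ‖gfun f η‖) *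
          sSup ((fun s => ‖u s - v s‖) '' Set.Icc T (T + δ)) := by
  intro t ht
  obtain ⟨htT, htA⟩ := ht
  have hA : (0:ℝ) ≤ T + δ := by linarith
  have h0t : 0 ≤ t := le_trans hT htT
  have hth : 0 ≤ t / h := div_nonneg h0t hh.le
  -- continuous extensions of u and v
  set u' : ℝ → E d := Set.IccExtend hA ((Set.Icc (0:ℝ) (T + δ)).restrict u) with hu'def
  set v' : ℝ → E d := Set.IccExtend hA ((Set.Icc (0:ℝ) (T + δ)).restrict v) with hv'def
  have hu'c : Continuous u' := Continuous.Icc_extend' (ContinuousOn.restrict hu)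
  have hv'c : Continuous v' := Continuous.Icc_extend' (ContinuousOn.restrict hv)
  have hu'eq : ∀ s ∈ Set.Icc (0:ℝ) (T + δ), u' s = u s := by
    intro s hs
    rw [hu'def, Set.IccExtend_of_mem _ _ hs]
    rfl
  have hv'eq : ∀ s ∈ Set.Icc (0:ℝ) (T + δ), v' s = v s := by
    intro s hs
    rw [hv'def, Set.IccExtend_of_mem _ _ hs]
    rfl
  have huv' : ∀ s ≤ T, u' s = v' s := by
    intro s hs
    rcases le_or_gt s 0 with h0 | h0
    · rw [hu'def, hv'def, Set.IccExtend_of_le_left _ _ h0, Set.IccExtend_of_le_left _ _ h0]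
      exact huv ⟨le_refl 0, hT⟩
    · have hs' : s ∈ Set.Icc (0:ℝ) (T + δ) := ⟨h0.le, by linarith⟩
      rw [hu'eq s hs', hv'eq s hs']
      exact huv ⟨h0.le, hs⟩
  -- the sup
  set M := sSup ((fun s => ‖u s - v s‖) '' Set.Icc T (T + δ)) with hMdef
  have hsubIcc : Set.Icc T (T + δ) ⊆ Set.Icc 0 (T + δ) := Set.Icc_subset_Icc_left hT
  have hbdd : BddAbove ((fun s => ‖u s - v s‖) '' Set.Icc T (T + δ)) :=
    (isCompact_Icc.image_of_continuousOn
      (((hu.mono hsubIcc).sub (hv.mono hsubIcc)).norm)).bddAbove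
  have hMle : ∀ s ∈ Set.Icc T (T + δ), ‖u s - v s‖ ≤ M := fun s hs =>
    le_csSup hbdd ⟨s, hs, rfl⟩
  have hM0 : 0 ≤ M := le_trans (norm_nonneg _) (hMle T ⟨le_refl T, by linarith⟩)
  -- the difference function
  set w : ℝ → E d := fun s => u' s - v' s with hwdef
  have hwc : Continuous w := hu'c.sub hv'c
  have hw0 : ∀ s ≤ T, w s = 0 := fun s hs => sub_eq_zero.mpr (huv' s hs)
  have hwM : ∀ s ∈ Set.Icc T (T + δ), ‖w s‖ ≤ M := by
    intro s hs
    have : w s = u s - v s := by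
      rw [hwdef]; dsimp only; rw [hu'eq s (hsubIcc hs), hv'eq s (hsubIcc hs)]
    rw [this]; exact hMle s hs
  -- key bound on integrals of w
  have hkey : ∀ a : ℝ, 0 ≤ a → a ≤ t → ‖∫ σ in a..t, w σ‖ ≤ (t - T) * M := by
    intro a ha hat
    rcases le_or_gt a T with haT | haT
    · have hsplit : (∫ σ in a..t, w σ) = (∫ σ in a..T, w σ) + ∫ σ in T..t, w σ :=
        (intervalIntegral.integral_add_adjacent_intervals (hwc.intervalIntegrable _ _)
          (hwc.intervalIntegrable _ _)).symm
      have h1 : (∫ σ in a..T, w σ) = 0 := by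
        rw [intervalIntegral.integral_congr (g := fun _ => (0 : E d))
          (fun s hs => by
            rw [Set.uIcc_of_le haT] at hs
            exact hw0 s hs.2)]
        simp
      rw [hsplit, h1, zero_add]
      have hb := intervalIntegral.norm_integral_le_of_norm_le_const (C := M) (a := T) (b := t)
        (f := w) (fun s hs => by
          rw [Set.uIoc_of_le htT] at hs
          exact hwM s ⟨hs.1.le, le_trans hs.2 htA⟩)
      calc ‖∫ σ in T..t, w σ‖ ≤ M * |t - T| := hb
        _ = (t - T) * M := by rw [abs_of_nonneg (by linarith)]; ring
    · have hb := intervalIntegral.norm_integral_le_of_norm_le_const (C := M) (a := a) (b := t)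
        (f := w) (fun s hs => by
          rw [Set.uIoc_of_le hat] at hs
          exact hwM s ⟨le_trans haT.le hs.1.le, le_trans hs.2 htA⟩)
      calc ‖∫ σ in a..t, w σ‖ ≤ M * |t - a| := hb
        _ ≤ M * (t - T) := by
            rw [abs_of_nonneg (by linarith)]
            exact mul_le_mul_of_nonneg_left (by linarith) hM0
        _ = (t - T) * M := mul_comm _ _
  -- the inner integral, rewritten
  set c : (ℝ → E d) → E d → ℝ := cfun t h with hcdef
  -- rewriting calF
  have hcalF : ∀ p p' : ℝ → E d, (∀ s ∈ Set.Icc (0:ℝ) (T + δ), p' s = p s) →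
      calF f h p t = (-2 : ℝ) • ∫ η, c p' η • gfun f η := by
    intro p p' hpp'
    unfold calF
    congr 1
    have hfe : (fun η : E d => (∫ r in (0:ℝ)..(t / h),
        Real.cos (r * (‖η‖ ^ 2 - 2 * ⟪η, intAvg p (t - h * r) t⟫))) • gfun f η)
        = fun η => c p' η • gfun f η := by
      funext η
      congr 1
      simp only [hcdef, cfun]
      apply intervalIntegral.integral_congr
      intro r hr
      rw [Set.uIcc_of_le hth] at hr
      obtain ⟨hr0, hrt⟩ := hr
      have hhr : h * r ≤ t := by
        have := (le_div_iff₀ hh).mp hrt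
        linarith [this]
      have hint : (∫ σ in (t - h * r)..t, p σ) = ∫ σ in (t - h * r)..t, p' σ := by
        apply intervalIntegral.integral_congr
        intro s hs
        rw [Set.uIcc_of_le (by nlinarith : t - h * r ≤ t)] at hs
        exact (hpp' s ⟨by linarith [hs.1], le_trans hs.2 htA⟩).symm
      unfold intAvg
      dsimp only
      rw [← hint]
      rcases eq_or_lt_of_le hr0 with hr0' | hr0'
      · rw [← hr0']
        simp
      · congr 1
        rw [real_inner_smul_right]
        have h1 : t - (t - h * r) = h * r := by ring
        rw [h1]
        have hhr0 : h * r ≠ 0 := by positivity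
        field_simp
    rw [hfe]
  -- continuity of the primitive
  have hprim : ∀ p' : ℝ → E d, Continuous p' →
      Continuous fun r : ℝ => ∫ σ in (t - h * r)..t, p' σ := by
    intro p' hp'
    have h1 : Continuous fun x : ℝ => ∫ σ in t..x, p' σ :=
      intervalIntegral.continuous_primitive (fun a b => hp'.intervalIntegrable a b) t
    have h2 : Continuous fun r : ℝ => -∫ σ in t..(t - h * r), p' σ :=
      (h1.comp (continuous_const.sub (continuous_const.mul continuous_id))).neg
    have h3 : (fun r : ℝ => ∫ σ in (t - h * r)..t, p' σ)
        = fun r : ℝ => -∫ σ in t..(t - h * r), p' σ :=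
      funext fun r => intervalIntegral.integral_symm t (t - h * r)
    rw [h3]
    exact h2
  -- continuity of c p'
  have hccont : ∀ p' : ℝ → E d, Continuous p' → Continuous (c p') := by
    intro p' hp'
    rw [hcdef]
    unfold cfun
    apply intervalIntegral.continuous_parametric_intervalIntegral_of_continuous'
    have : Continuous fun q : E d × ℝ =>
        q.2 * ‖q.1‖ ^ 2 - 2 * h⁻¹ * ⟪q.1, ∫ σ in (t - h * q.2)..t, p' σ⟫ := by
      apply Continuous.sub
      · exact continuous_snd.mul ((continuous_fst.norm).pow 2)
      · exact continuous_const.mul (continuous_fst.inner ((hprim p' hp').comp continuous_snd))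
    exact Real.continuous_cos.comp this
  -- continuity and norm of gfun
  have hgcont : Continuous (gfun f) := by
    unfold gfun
    exact ((f.continuous.norm.pow 2)).smul continuous_id
  have hgnorm : ∀ η : E d, ‖gfun f η‖ = ‖f η‖ ^ 2 * ‖η‖ := by
    intro η
    unfold gfun
    rw [norm_smul, Real.norm_of_nonneg (by positivity)]
  set Cf := SchwartzMap.seminorm ℝ 0 0 f with hCf
  have hCf0 : 0 ≤ Cf := apply_nonneg _ _
  have hfb : ∀ η : E d, ‖f η‖ ≤ Cf := fun η => SchwartzMap.norm_le_seminorm ℝ f η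
  have hgb : ∀ η : E d, ‖gfun f η‖ ≤ Cf * (‖η‖ ^ 1 * ‖f η‖) := by
    intro η
    rw [hgnorm]
    calc ‖f η‖ ^ 2 * ‖η‖ = ‖f η‖ * ‖f η‖ * ‖η‖ := by ring
      _ ≤ Cf * ‖f η‖ * ‖η‖ := by
          apply mul_le_mul_of_nonneg_right _ (norm_nonneg _)
          exact mul_le_mul_of_nonneg_right (hfb η) (norm_nonneg _)
      _ = Cf * (‖η‖ ^ 1 * ‖f η‖) := by ring
  -- integrability of the weight
  have hgint : Integrable (fun η : E d => ‖η‖ * ‖gfun f η‖) := by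
    apply Integrable.mono ((f.integrable_pow_mul volume 2).const_mul Cf)
      (continuous_norm.mul hgcont.norm).aestronglyMeasurable
    refine Eventually.of_forall fun η => ?_
    show ‖‖η‖ * ‖gfun f η‖‖ ≤ ‖Cf * (‖η‖ ^ 2 * ‖f η‖)‖
    rw [Real.norm_of_nonneg (by positivity), Real.norm_of_nonneg (by positivity), hgnorm]
    calc ‖η‖ * (‖f η‖ ^ 2 * ‖η‖) = (‖η‖ ^ 2 * ‖f η‖) * ‖f η‖ := by ring
      _ ≤ (‖η‖ ^ 2 * ‖f η‖) * Cf := by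
          exact mul_le_mul_of_nonneg_left (hfb η) (by positivity)
      _ = Cf * (‖η‖ ^ 2 * ‖f η‖) := mul_comm _ _
  -- bound on c p'
  have hcb : ∀ (p' : ℝ → E d) (η : E d), |c p' η| ≤ t / h := by
    intro p' η
    have hb := intervalIntegral.norm_integral_le_of_norm_le_const (C := 1) (a := (0:ℝ))
      (b := t / h)
      (f := fun r => Real.cos (r * ‖η‖ ^ 2 - 2 * h⁻¹ * ⟪η, ∫ σ in (t - h * r)..t, p' σ⟫))
      (fun r _ => by rw [Real.norm_eq_abs]; exact Real.abs_cos_le_one _)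
    rw [hcdef]
    unfold cfun
    calc |∫ r in (0:ℝ)..(t / h),
        Real.cos (r * ‖η‖ ^ 2 - 2 * h⁻¹ * ⟪η, ∫ σ in (t - h * r)..t, p' σ⟫)| ≤ 1 * |t / h - 0| :=
        hb
      _ = t / h := by rw [sub_zero, abs_of_nonneg hth, one_mul]
  -- integrability of the integrands
  have hAint : ∀ p' : ℝ → E d, Continuous p' →
      Integrable (fun η : E d => c p' η • gfun f η) := by
    intro p' hp'
    apply Integrable.mono ((f.integrable_pow_mul volume 1).const_mul (t / h * Cf))
      (((hccont p' hp').smul hgcont)).aestronglyMeasurable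
    refine Eventually.of_forall fun η => ?_
    show ‖c p' η • gfun f η‖ ≤ ‖t / h * Cf * (‖η‖ ^ 1 * ‖f η‖)‖
    rw [norm_smul, Real.norm_eq_abs,
      Real.norm_of_nonneg (by positivity : (0:ℝ) ≤ t / h * Cf * (‖η‖ ^ 1 * ‖f η‖))]
    calc |c p' η| * ‖gfun f η‖ ≤ (t / h) * (Cf * (‖η‖ ^ 1 * ‖f η‖)) :=
        mul_le_mul (hcb p' η) (hgb η) (norm_nonneg _) hth
      _ = t / h * Cf * (‖η‖ ^ 1 * ‖f η‖) := by ring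
  -- the pointwise bound on the difference of the c's
  have hcdiff : ∀ η : E d, |c u' η - c v' η| ≤ 2 * (t / h ^ 2) * (t - T) * M * ‖η‖ := by
    intro η
    have hiu : IntervalIntegrable
        (fun r => Real.cos (r * ‖η‖ ^ 2 - 2 * h⁻¹ * ⟪η, ∫ σ in (t - h * r)..t, u' σ⟫))
        volume 0 (t / h) := by
      apply Continuous.intervalIntegrable
      apply Real.continuous_cos.comp
      apply Continuous.sub
      · exact continuous_id.mul continuous_const
      · exact continuous_const.mul (continuous_const.inner (hprim u' hu'c))
    have hiv : IntervalIntegrable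
        (fun r => Real.cos (r * ‖η‖ ^ 2 - 2 * h⁻¹ * ⟪η, ∫ σ in (t - h * r)..t, v' σ⟫))
        volume 0 (t / h) := by
      apply Continuous.intervalIntegrable
      apply Real.continuous_cos.comp
      apply Continuous.sub
      · exact continuous_id.mul continuous_const
      · exact continuous_const.mul (continuous_const.inner (hprim v' hv'c))
    rw [hcdef]
    unfold cfun
    rw [← intervalIntegral.integral_sub hiu hiv]
    have hb := intervalIntegral.norm_integral_le_of_norm_le_const
      (C := 2 * h⁻¹ * ‖η‖ * ((t - T) * M)) (a := (0:ℝ)) (b := t / h)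
      (f := fun r => Real.cos (r * ‖η‖ ^ 2 - 2 * h⁻¹ * ⟪η, ∫ σ in (t - h * r)..t, u' σ⟫)
        - Real.cos (r * ‖η‖ ^ 2 - 2 * h⁻¹ * ⟪η, ∫ σ in (t - h * r)..t, v' σ⟫)) ?_
    · calc |∫ r in (0:ℝ)..(t / h), _| ≤ 2 * h⁻¹ * ‖η‖ * ((t - T) * M) * |t / h - 0| := hb
        _ = 2 * (t / h ^ 2) * (t - T) * M * ‖η‖ := by
            rw [sub_zero, abs_of_nonneg hth]
            field_simp
    · intro r hr
      rw [Set.uIoc_of_le hth] at hr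
      have hr0 : 0 < r := hr.1
      have hrt : r ≤ t / h := hr.2
      have hhr : h * r ≤ t := by
        have := (le_div_iff₀ hh).mp hrt
        linarith [this]
      have ha0 : 0 ≤ t - h * r := by linarith
      have hat : t - h * r ≤ t := by nlinarith
      set Iu := ∫ σ in (t - h * r)..t, u' σ with hIu
      set Iv := ∫ σ in (t - h * r)..t, v' σ with hIv
      have hIdiff : Iu - Iv = ∫ σ in (t - h * r)..t, w σ := by
        rw [hIu, hIv, ← intervalIntegral.integral_sub (hu'c.intervalIntegrable _ _)
          (hv'c.intervalIntegrable _ _)]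
      have hIb : ‖Iu - Iv‖ ≤ (t - T) * M := by
        rw [hIdiff]; exact hkey _ ha0 hat
      rw [Real.norm_eq_abs]
      calc |Real.cos (r * ‖η‖ ^ 2 - 2 * h⁻¹ * ⟪η, Iu⟫)
            - Real.cos (r * ‖η‖ ^ 2 - 2 * h⁻¹ * ⟪η, Iv⟫)|
          ≤ |(r * ‖η‖ ^ 2 - 2 * h⁻¹ * ⟪η, Iu⟫) - (r * ‖η‖ ^ 2 - 2 * h⁻¹ * ⟪η, Iv⟫)| :=
            abs_cos_sub_cos_le _ _
        _ = 2 * h⁻¹ * |⟪η, Iu - Iv⟫| := by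
            rw [inner_sub_right]
            rw [show (r * ‖η‖ ^ 2 - 2 * h⁻¹ * ⟪η, Iu⟫) - (r * ‖η‖ ^ 2 - 2 * h⁻¹ * ⟪η, Iv⟫)
              = -(2 * h⁻¹ * (⟪η, Iu⟫ - ⟪η, Iv⟫)) from by ring]
            rw [abs_neg, abs_mul, abs_of_nonneg (by positivity : (0:ℝ) ≤ 2 * h⁻¹)]
        _ ≤ 2 * h⁻¹ * (‖η‖ * ‖Iu - Iv‖) := by
            apply mul_le_mul_of_nonneg_left (abs_real_inner_le_norm _ _) (by positivity)
        _ ≤ 2 * h⁻¹ * (‖η‖ * ((t - T) * M)) := by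
            apply mul_le_mul_of_nonneg_left
              (mul_le_mul_of_nonneg_left hIb (norm_nonneg _)) (by positivity)
        _ = 2 * h⁻¹ * ‖η‖ * ((t - T) * M) := by ring
  -- final assembly
  rw [hcalF u u' hu'eq, hcalF v v' hv'eq, ← smul_sub, norm_smul,
    ← integral_sub (hAint u' hu'c) (hAint v' hv'c)]
  have hmaj : Integrable (fun η : E d =>
      2 * (t / h ^ 2) * (t - T) * M * (‖η‖ * ‖gfun f η‖)) := hgint.const_mul _
  have hb1 : ‖∫ η, (c u' η • gfun f η - c v' η • gfun f η)‖ ≤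
      ∫ η, 2 * (t / h ^ 2) * (t - T) * M * (‖η‖ * ‖gfun f η‖) := by
    apply norm_integral_le_of_norm_le hmaj
    refine Eventually.of_forall fun η => ?_
    rw [← sub_smul, norm_smul, Real.norm_eq_abs]
    calc |c u' η - c v' η| * ‖gfun f η‖
        ≤ (2 * (t / h ^ 2) * (t - T) * M * ‖η‖) * ‖gfun f η‖ :=
          mul_le_mul_of_nonneg_right (hcdiff η) (norm_nonneg _)
      _ = 2 * (t / h ^ 2) * (t - T) * M * (‖η‖ * ‖gfun f η‖) := by ring
  have hb2 : (∫ η, 2 * (t / h ^ 2) * (t - T) * M * (‖η‖ * ‖gfun f η‖)) =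
      2 * (t / h ^ 2) * (t - T) * M * ∫ η, ‖η‖ * ‖gfun f η‖ :=
    integral_const_mul _ _
  have hn2 : ‖(-2 : ℝ)‖ = 2 := by norm_num
  rw [hn2]
  have := hb1.trans hb2.le
  nlinarith [this, norm_nonneg (∫ η, (c u' η • gfun f η - c v' η • gfun f η))]
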